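/- Monotonic improvement guarantee of conservative policy iteration: with M_i(π) = L_{π_i}(π) − C · D_KL^max(π, π_i) where C = 4εγ/(1−γ)², the bound |J(π) − L_{π_i}(π)| ≤ C · D_KL^max(π, π_i)² (with D_KL^max ≤ 1, or stated with the squared term) implies J(π_{i+1}) − J(π_i) ≥ M_i(π_{i+1}) − M_i(π_i) whenever π_{i+1} maximizes M_i. In particular, since M_i(π_i) = J(π_i), the sequence J(π_0) ≤ J(π_1) ≤ J(π_2) ≤ … is monotonically nondecreasing. -/
import Mathlib


open scoped BigOperators

/-- The one-step expectation operator of policy `π` in an MDP with transition kernel `P`: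
`(expOp P π f)(s,a) = ∑_{s'} P(s'|s,a) ∑_{a'} π(a'|s') f(s',a')`. -/
noncomputable def expOp {S A : Type*} [Fintype S] [Fintype A]
    (P : S → A → S → ℝ) (π : S → A → ℝ) (f : S → A → ℝ) : S → A → ℝ :=
  fun s a => ∑ s', P s a s' * ∑ a', π s' a' * f s' a'

/-- The state-action value function `Q^π(s,a)`, the expected discounted sum of rewards
`∑_{k≥0} γ^k r(s_k, a_k)` starting from `(s,a)` and following `π`, written via the
`k`-step expectation operators: `Q^π = ∑_{k≥0} γ^k (expOp^k r)`. -/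
noncomputable def Qval {S A : Type*} [Fintype S] [Fintype A]
    (γ : ℝ) (P : S → A → S → ℝ) (π : S → A → ℝ) (r : S → A → ℝ) : S → A → ℝ :=
  fun s a => ∑' k : ℕ, γ ^ k * ((expOp P π)^[k] r) s a

/-- The state value function `V^π(s) = ∑_a π(a|s) Q^π(s,a)`. -/
noncomputable def Vval {S A : Type*} [Fintype S] [Fintype A]
    (γ : ℝ) (P : S → A → S → ℝ) (π : S → A → ℝ) (r : S → A → ℝ) : S → ℝ :=
  fun s => ∑ a, π s a * Qval γ P π r s a

/-- The advantage function `A^π(s,a) = Q^π(s,a) − V^π(s)`. -/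
noncomputable def Adv {S A : Type*} [Fintype S] [Fintype A]
    (γ : ℝ) (P : S → A → S → ℝ) (π : S → A → ℝ) (r : S → A → ℝ) : S → A → ℝ :=
  fun s a => Qval γ P π r s a - Vval γ P π r s

/-- The state transition matrix induced by policy `π`. -/
noncomputable def Pmat {S A : Type*} [Fintype S] [Fintype A]
    (P : S → A → S → ℝ) (π : S → A → ℝ) : Matrix S S ℝ :=
  fun s s' => ∑ a, π s a * P s a s'

/-- The (unnormalized) discounted state visitation measure
`ρ_π(s) = ∑_{k≥0} γ^k Pr_π(s_k = s | s₀ ∼ d₀)`. -/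
noncomputable def occup {S A : Type*} [Fintype S] [Fintype A] [DecidableEq S]
    (γ : ℝ) (P : S → A → S → ℝ) (π : S → A → ℝ) (d0 : S → ℝ) : S → ℝ :=
  fun s => ∑' k : ℕ, γ ^ k * ∑ s0, d0 s0 * (Pmat P π ^ k) s0 s

/-- The expected return `J(π) = E_{s₀∼d₀}[V^π(s₀)]`. -/
noncomputable def Jfun {S A : Type*} [Fintype S] [Fintype A]
    (γ : ℝ) (P : S → A → S → ℝ) (π : S → A → ℝ) (r : S → A → ℝ) (d0 : S → ℝ) : ℝ :=
  ∑ s, d0 s * Vval γ P π r s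

/-- Kullback–Leibler divergence between two finitely supported distributions. -/
noncomputable def KLdiv {A : Type*} [Fintype A] (p q : A → ℝ) : ℝ :=
  ∑ a, p a * Real.log (p a / q a)

/-- `D_KL^max(π, π') = max_s D_KL(π(·|s) ‖ π'(·|s))`. -/
noncomputable def DKLmax {S A : Type*} [Fintype A] [Fintype S] [Nonempty S]
    (π π' : S → A → ℝ) : ℝ :=
  ⨆ s, KLdiv (π s) (π' s)

/-- The local (surrogate) approximation
`L_{π_base}(π) = J(π_base) + ∑_s ρ_{π_base}(s) ∑_a π(a|s) A^{π_base}(s,a)`. -/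
noncomputable def Lsur {S A : Type*} [Fintype S] [Fintype A] [DecidableEq S]
    (γ : ℝ) (P : S → A → S → ℝ) (r : S → A → ℝ) (d0 : S → ℝ)
    (πbase π : S → A → ℝ) : ℝ :=
  Jfun γ P πbase r d0 + ∑ s, occup γ P πbase d0 s * ∑ a, π s a * Adv γ P πbase r s a

lemma KLdiv_self {A : Type*} [Fintype A] (p : A → ℝ) (hp : ∀ a, 0 < p a) :
    KLdiv p p = 0 := by
  unfold KLdiv
  apply Finset.sum_eq_zero
  intro a _
  rw [div_self (hp a).ne', Real.log_one, mul_zero]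

lemma DKLmax_self {S A : Type*} [Fintype A] [Fintype S] [Nonempty S]
    (π : S → A → ℝ) (hπ : ∀ s a, 0 < π s a) : DKLmax π π = 0 := by
  unfold DKLmax
  have : ∀ s, KLdiv (π s) (π s) = 0 := fun s => KLdiv_self _ (hπ s)
  simp [this]

lemma Lsur_self {S A : Type*} [Fintype S] [Fintype A] [DecidableEq S]
    (γ : ℝ) (P : S → A → S → ℝ) (r : S → A → ℝ) (d0 : S → ℝ)
    (π : S → A → ℝ) (hπ1 : ∀ s, ∑ a, π s a = 1) :
    Lsur γ P r d0 π π = Jfun γ P π r d0 := by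
  unfold Lsur
  have h : ∀ s, ∑ a, π s a * Adv γ P π r s a = 0 := by
    intro s
    unfold Adv
    simp only [mul_sub, Finset.sum_sub_distrib, ← Finset.sum_mul, hπ1 s, one_mul]
    simp [Vval]
  simp [h]

/-- Monotonic improvement guarantee of conservative policy iteration.  With
`M_i(π) = L_{π_i}(π) − C · D_KL^max(π, π_i)²`, assuming the lower bound
`J(π) ≥ L_{π_i}(π) − C · D_KL^max(π, π_i)²` for all (stochastic) policies `π`, if each
`π_{i+1}` maximizes `M_i` then `J(π_{i+1}) − J(π_i) ≥ M_i(π_{i+1}) − M_i(π_i)`, and since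
`M_i(π_i) = J(π_i)` the sequence `J(π_0) ≤ J(π_1) ≤ J(π_2) ≤ …` is monotonically
nondecreasing. -/
theorem cpi_monotonic_improvement
    {S A : Type*} [Fintype S] [Fintype A] [DecidableEq S] [Nonempty S] [Nonempty A]
    (γ : ℝ) (hγ0 : 0 ≤ γ) (hγ1 : γ < 1)
    (P : S → A → S → ℝ) (hP0 : ∀ s a s', 0 ≤ P s a s') (hP1 : ∀ s a, ∑ s', P s a s' = 1)
    (r : S → A → ℝ)
    (d0 : S → ℝ) (hd0 : ∀ s, 0 ≤ d0 s) (hd1 : ∑ s, d0 s = 1)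
    (C : ℝ) (hC : 0 ≤ C)
    (πseq : ℕ → S → A → ℝ)
    (hπ0 : ∀ i s a, 0 < πseq i s a) (hπ1 : ∀ i s, ∑ a, πseq i s a = 1)
    (hlb : ∀ i (π : S → A → ℝ), (∀ s a, 0 < π s a) → (∀ s, ∑ a, π s a = 1) →
      Lsur γ P r d0 (πseq i) π - C * DKLmax π (πseq i) ^ 2 ≤ Jfun γ P π r d0)
    (hmax : ∀ i (π : S → A → ℝ), (∀ s a, 0 < π s a) → (∀ s, ∑ a, π s a = 1) →
      Lsur γ P r d0 (πseq i) π - C * DKLmax π (πseq i) ^ 2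
        ≤ Lsur γ P r d0 (πseq i) (πseq (i + 1))
            - C * DKLmax (πseq (i + 1)) (πseq i) ^ 2) :
    (∀ i, (Lsur γ P r d0 (πseq i) (πseq (i + 1))
            - C * DKLmax (πseq (i + 1)) (πseq i) ^ 2)
          - (Lsur γ P r d0 (πseq i) (πseq i)
            - C * DKLmax (πseq i) (πseq i) ^ 2)
        ≤ Jfun γ P (πseq (i + 1)) r d0 - Jfun γ P (πseq i) r d0) ∧
    Monotone (fun i => Jfun γ P (πseq i) r d0) := by
  have hMi : ∀ i, Lsur γ P r d0 (πseq i) (πseq i)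
      - C * DKLmax (πseq i) (πseq i) ^ 2 = Jfun γ P (πseq i) r d0 := by
    intro i
    rw [Lsur_self γ P r d0 (πseq i) (hπ1 i), DKLmax_self (πseq i) (hπ0 i)]
    ring
  have key : ∀ i,
      (Lsur γ P r d0 (πseq i) (πseq (i + 1))
        - C * DKLmax (πseq (i + 1)) (πseq i) ^ 2)
      - (Lsur γ P r d0 (πseq i) (πseq i)
        - C * DKLmax (πseq i) (πseq i) ^ 2)
      ≤ Jfun γ P (πseq (i + 1)) r d0 - Jfun γ P (πseq i) r d0 := by
    intro i
    rw [hMi i]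
    have h1 := hlb i (πseq (i + 1)) (hπ0 (i + 1)) (hπ1 (i + 1))
    linarith
  refine ⟨key, monotone_nat_of_le_succ fun i => ?_⟩
  have h2 := hmax i (πseq i) (hπ0 i) (hπ1 i)
  have h3 := key i
  rw [hMi i] at h2 h3
  linarith
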